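/- Let u be an aperiodic sequence over a finite alphabet. Then for every n ∈ ℕ there exist a word g of length n and two distinct letters c, d such that both gc and gd occur infinitely many times in u (in particular, g is a right special factor of u). -/
import Mathlib


namespace ReflPaper

variable {A : Type*}

/-- The factor of `u` of length `n` at position `i`: `u(i) u(i+1) ⋯ u(i+n-1)`. -/
def factorAt (u : ℕ → A) (n i : ℕ) : List A :=
  (List.range n).map (fun k => u (i + k))

/-- The word `w` occurs in the sequence `u` at position `i`. -/
def OccursAt (u : ℕ → A) (w : List A) (i : ℕ) : Prop :=
  w = factorAt u w.length i

/-- The language of `u`: the set of all factors of `u`. -/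
def Lang (u : ℕ → A) : Set (List A) := {w | ∃ i, OccursAt u w i}

/-- The set of factors of `u` of length `n`. -/
def LangN (u : ℕ → A) (n : ℕ) : Set (List A) := {w | w.length = n ∧ w ∈ Lang u}

/-- The word `w` occurs infinitely many times in `u`. -/
def OccursInf (u : ℕ → A) (w : List A) : Prop := {i | OccursAt u w i}.Infinite

/-- `u` is eventually periodic. -/
def EventuallyPeriodic (u : ℕ → A) : Prop :=
  ∃ N p : ℕ, 1 ≤ p ∧ ∀ i, N ≤ i → u (i + p) = u i

/-- Two words are reflectively equivalent if one equals the other or its reversal. -/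
def ReflEquiv (w v : List A) : Prop := w = v ∨ w = v.reverse

/-- Reflective equivalence as a setoid on words. -/
def reflSetoid (A : Type*) : Setoid (List A) where
  r := ReflEquiv
  iseqv := by
    constructor
    · intro w; exact Or.inl rfl
    · intro w v h
      rcases h with h | h
      · exact Or.inl h.symm
      · subst h; simp [ReflEquiv]
    · intro w v x h1 h2
      rcases h1 with h1 | h1 <;> rcases h2 with h2 | h2 <;> subst h1 <;>
        simp [ReflEquiv, h2]

/-- The number of reflective-equivalence classes of words in a set `S`. -/
noncomputable def nClasses (S : Set (List A)) : ℕ :=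
  Set.ncard (Quotient.mk (reflSetoid A) '' S)

/-- The reflection complexity `r_u(n)`. -/
noncomputable def reflComplexity (u : ℕ → A) (n : ℕ) : ℕ := nClasses (LangN u n)

/-- The factor complexity `C_u(n) = #L_n(u)`. -/
noncomputable def factorComplexity (u : ℕ → A) (n : ℕ) : ℕ := (LangN u n).ncard

/-- The palindromic complexity `P_u(n)`. -/
noncomputable def palComplexity (u : ℕ → A) (n : ℕ) : ℕ :=
  Set.ncard {w ∈ LangN u n | w.reverse = w}

/-- Both-sided extensions of `w` in the language of `u`. -/
def Bext (u : ℕ → A) (w : List A) : Set (List A) :=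
  {x ∈ Lang u | ∃ a b : A, x = a :: (w ++ [b])}

/-- Right extensions of `w` in the language of `u`. -/
def Rext (u : ℕ → A) (w : List A) : Set (List A) :=
  {x ∈ Lang u | ∃ a : A, x = w ++ [a]}

/-- `T(w)`: the number of reflective-equivalence classes of `Bext(w) ∪ Bext(w̄)`. -/
noncomputable def TT (u : ℕ → A) (w : List A) : ℕ :=
  nClasses (Bext u w ∪ Bext u w.reverse)

/-- `w` is a right special factor of `u`. -/
def RightSpecial (u : ℕ → A) (w : List A) : Prop :=
  ∃ a b : A, a ≠ b ∧ w ++ [a] ∈ Lang u ∧ w ++ [b] ∈ Lang u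

/-- `w` is a left special factor of `u`. -/
def LeftSpecial (u : ℕ → A) (w : List A) : Prop :=
  ∃ a b : A, a ≠ b ∧ a :: w ∈ Lang u ∧ b :: w ∈ Lang u

/-- `u` is Sturmian: `C_u(n) = n + 1` for all `n`. -/
def Sturmian (u : ℕ → A) : Prop := ∀ n, factorComplexity u n = n + 1

/-- `u` is quasi-Sturmian: `C_u(n) = n + c` eventually. -/
def QuasiSturmian (u : ℕ → A) : Prop :=
  ∃ n₀ c : ℕ, ∀ n, n₀ ≤ n → factorComplexity u n = n + c


theorem factorAt_length' (u : ℕ → A) (m i : ℕ) : (factorAt u m i).length = m := by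
  simp [factorAt]

theorem factorAt_eq_iff' (u : ℕ → A) (m i j : ℕ) :
    factorAt u m i = factorAt u m j ↔ ∀ k < m, u (i + k) = u (j + k) := by
  constructor
  · intro h k hk
    have h1 : (factorAt u m i)[k]'(by simp [factorAt, hk]) =
        (factorAt u m j)[k]'(by simp [factorAt, hk]) := by
      simp only [h]
    simpa [factorAt] using h1
  · intro h
    apply List.ext_getElem (by simp [factorAt])
    intro k h1 h2
    have hk : k < m := by simpa [factorAt] using h1
    simpa [factorAt] using h k hk

theorem factorAt_succ' (u : ℕ → A) (m i : ℕ) :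
    factorAt u (m + 1) i = factorAt u m i ++ [u (i + m)] := by
  simp [factorAt, List.range_succ]

theorem occursInf_factorAt_iff' (u : ℕ → A) (m i : ℕ) :
    OccursInf u (factorAt u m i) ↔ {j | factorAt u m j = factorAt u m i}.Infinite := by
  have hset : {i' | OccursAt u (factorAt u m i) i'} = {j | factorAt u m j = factorAt u m i} := by
    ext j
    simp [OccursAt, factorAt_length', eq_comm]
  unfold OccursInf
  rw [hset]

/-- for aperiodic `u` and every `n`, there are a word `g` of length `n`
and distinct letters `c, d` such that `gc` and `gd` occur infinitely many times in `u`. -/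
theorem stmt17 {A : Type*} [Fintype A] (u : ℕ → A) (hu : ¬ EventuallyPeriodic u) :
    ∀ n : ℕ, ∃ (g : List A) (c d : A), g.length = n ∧ c ≠ d ∧
      OccursInf u (g ++ [c]) ∧ OccursInf u (g ++ [d]) := by
  intro n
  by_contra hcon
  push_neg at hcon
  apply hu
  set B : Set ℕ := {i | ¬ OccursInf u (factorAt u (n+1) i)} with hB
  have hBfin : B.Finite := by
    have hsub : B ⊆ ⋃ v : Fin (n+1) → A, {i ∈ B | (fun k : Fin (n+1) => u (i + k)) = v} := by
      intro i hi
      exact Set.mem_iUnion.2 ⟨fun k => u (i + k), hi, rfl⟩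
    refine Set.Finite.subset (Set.finite_iUnion fun v => ?_) hsub
    by_cases hv : ({i ∈ B | (fun k : Fin (n+1) => u (i + k)) = v} : Set ℕ).Nonempty
    · obtain ⟨i0, hi0B, hi0v⟩ := hv
      have hfin : {j | factorAt u (n+1) j = factorAt u (n+1) i0}.Finite := by
        rw [← Set.not_infinite]
        intro hinf
        exact hi0B ((occursInf_factorAt_iff' u (n+1) i0).2 hinf)
      refine hfin.subset ?_
      rintro j ⟨-, hjv⟩
      show factorAt u (n+1) j = factorAt u (n+1) i0
      rw [factorAt_eq_iff']
      intro k hk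
      have := congrFun (hjv.trans hi0v.symm) ⟨k, hk⟩
      simpa using this
    · rw [Set.not_nonempty_iff_eq_empty] at hv
      simp [hv]
  obtain ⟨M, hM⟩ := hBfin.bddAbove
  have hOcc : ∀ i, M < i → OccursInf u (factorAt u (n+1) i) := by
    intro i hi
    by_contra h
    have : i ≤ M := hM h
    omega
  have key : ∀ a b, M < a → M < b → (∀ k < n, u (a + k) = u (b + k)) →
      u (a + n) = u (b + n) := by
    intro a b ha hb hpre
    by_contra hne
    have hfa : factorAt u n a ++ [u (a + n)] = factorAt u (n+1) a :=
      (factorAt_succ' u n a).symm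
    have hfb : factorAt u n a ++ [u (b + n)] = factorAt u (n+1) b := by
      rw [(factorAt_eq_iff' u n a b).2 hpre]
      exact (factorAt_succ' u n b).symm
    have h1 : OccursInf u (factorAt u n a ++ [u (a + n)]) := by
      rw [hfa]; exact hOcc a ha
    have h2 : OccursInf u (factorAt u n a ++ [u (b + n)]) := by
      rw [hfb]; exact hOcc b hb
    exact hcon (factorAt u n a) (u (a+n)) (u (b+n)) (factorAt_length' u n a) hne h1 h2
  have pair : ∃ i j : ℕ, M < i ∧ i < j ∧ ∀ k : Fin n, u (i + (k : ℕ)) = u (j + (k : ℕ)) := by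
    obtain ⟨t1, t2, hne, heq⟩ := Finite.exists_ne_map_eq_of_infinite
      (fun t : ℕ => fun k : Fin n => u (M + 1 + t + (k : ℕ)))
    rcases hne.lt_or_gt with h | h
    · exact ⟨M + 1 + t1, M + 1 + t2, by omega, by omega, fun k => congrFun heq k⟩
    · exact ⟨M + 1 + t2, M + 1 + t1, by omega, by omega, fun k => congrFun heq.symm k⟩
  obtain ⟨i, j, hiM, hij, heqk⟩ := pair
  have main : ∀ t, u (i + t) = u (j + t) := by
    intro t
    induction t using Nat.strong_induction_on with
    | _ t ih =>
      by_cases ht : t < n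
      · simpa using heqk ⟨t, ht⟩
      · have hn : n ≤ t := by omega
        have hk : ∀ k < n, u (i + (t - n) + k) = u (j + (t - n) + k) := by
          intro k hkn
          rw [show i + (t - n) + k = i + ((t - n) + k) by omega,
            show j + (t - n) + k = j + ((t - n) + k) by omega]
          exact ih _ (by omega)
        have := key (i + (t - n)) (j + (t - n)) (by omega) (by omega) hk
        rw [show i + (t - n) + n = i + t by omega,
          show j + (t - n) + n = j + t by omega] at this
        exact this
  refine ⟨i, j - i, by omega, fun s hs => ?_⟩
  have h1 := main (s - i)
  rw [show i + (s - i) = s by omega, show j + (s - i) = s + (j - i) by omega] at h1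
  exact h1.symm

end ReflPaper
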